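/- Two-sided uniqueness of coprime lcm representations: if w₁, w₂, z₁, z₂ ∈ S satisfy w₁·S ∩ z₁·S = w₂·S ∩ z₂·S and, for all i, j ∈ {1, 2}, the only common divisor of wᵢ and z_j in S is 1, then w₁ = w₂ and z₁ = z₂. -/

import Mathlib

open scoped BigOperators

/-- `u` divides `w` in `S`: `w ∈ u·S`. -/
def SDvd {G : Type*} [Group G] (S : Submonoid G) (u w : G) : Prop := ∃ s ∈ S, w = u * s

/-- The left set `u·S = {u * s : s ∈ S}`. -/
def leftSet {G : Type*} [Group G] (S : Submonoid G) (u : G) : Set G := {w | ∃ s ∈ S, w = u * s}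

/-- `τ(u)`: the number of ordered factorizations `u = v * w` with `v, w ∈ S`. -/
noncomputable def tau {G : Type*} [Group G] (S : Submonoid G) (u : G) : ℕ :=
  Set.ncard {p : G × G | p.1 ∈ S ∧ p.2 ∈ S ∧ p.1 * p.2 = u}

/-- An integral monoid: a submonoid of a group satisfying Axioms I, II, III. -/
structure IntegralMonoid {G : Type*} [Group G] (S : Submonoid G) : Prop where
  ax1 : ∀ u ∈ S, u⁻¹ ∈ S → u = 1
  ax2 : ∀ u : G, ∃ x ∈ S, ∃ y ∈ S, u = x * y⁻¹ ∧
        ∀ z ∈ S, ∀ w ∈ S, u = z * w⁻¹ → ∃ c ∈ S, z = x * c ∧ w = y * c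
  ax3 : ∀ u ∈ S, {p : G × G | p.1 ∈ S ∧ p.2 ∈ S ∧ p.1 * p.2 = u}.Finite

/-- Axiom IV′ (homogeneity), in the equivalent form proved in the paper. -/
def Homogeneous {G : Type*} [Group G] (S : Submonoid G) : Prop :=
  ∀ w u v : G, w ∈ S → u ∈ S → v ∈ S →
    (∀ d ∈ S, SDvd S d w → SDvd S d u → d = 1) →
    (∀ d ∈ S, SDvd S d w → SDvd S d v → d = 1) →
    leftSet S w ∩ leftSet S u = leftSet S w ∩ leftSet S v → u = v

section Aux

variable {G : Type*} [Group G] (S : Submonoid G)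

lemma mem_leftSet_self (u : G) : u ∈ leftSet S u := ⟨1, S.one_mem, (mul_one u).symm⟩

variable {S}

lemma sdvd_trans {u v w : G} (h1 : SDvd S u v) (h2 : SDvd S v w) : SDvd S u w := by
  obtain ⟨s, hs, rfl⟩ := h1
  obtain ⟨t, ht, rfl⟩ := h2
  exact ⟨s * t, S.mul_mem hs ht, mul_assoc u s t⟩

lemma leftSet_subset {u v : G} (h : SDvd S u v) : leftSet S v ⊆ leftSet S u :=
  fun _ ht => sdvd_trans h ht

lemma sdvd_antisymm (hS : IntegralMonoid S) {u v : G} (hu : u ∈ S)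
    (h1 : SDvd S u v) (h2 : SDvd S v u) : u = v := by
  obtain ⟨s, hsS, rfl⟩ := h1
  obtain ⟨t, htS, ht⟩ := h2
  have hst : (1 : G) = s * t := by
    have : u * 1 = u * (s * t) := by rw [mul_one, ← mul_assoc]; exact ht
    exact mul_left_cancel this
  have hsinv : s⁻¹ = t := inv_eq_of_mul_eq_one_right hst.symm
  have hs1 : s = 1 := hS.ax1 s hsS (hsinv ▸ htS)
  rw [hs1, mul_one]

lemma exists_lcm (hS : IntegralMonoid S) {u v : G} (hu : u ∈ S) (hv : v ∈ S) :
    ∃ t ∈ S, leftSet S u ∩ leftSet S v = leftSet S t := by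
  obtain ⟨x, hx, y, hy, hxy, hmin⟩ := hS.ax2 (u⁻¹ * v)
  refine ⟨u * x, S.mul_mem hu hx, ?_⟩
  have hvy : v * y = u * x := by
    have hv' : v = u * (x * y⁻¹) := by rw [← hxy]; group
    rw [hv']; group
  ext t
  constructor
  · rintro ⟨⟨z, hzS, hz⟩, ⟨w, hwS, hw⟩⟩
    have hrep : u⁻¹ * v = z * w⁻¹ := by
      have huz : v * w = u * z := by rw [← hz, ← hw]
      have : v = u * z * w⁻¹ := by rw [← huz]; group
      rw [this]; group
    obtain ⟨c, hcS, hzc, _⟩ := hmin z hzS w hwS hrep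
    exact ⟨c, hcS, by rw [hz, hzc, mul_assoc]⟩
  · rintro ⟨s, hsS, rfl⟩
    exact ⟨⟨x * s, S.mul_mem hx hsS, mul_assoc u x s⟩,
      ⟨y * s, S.mul_mem hy hsS, by rw [← hvy, mul_assoc]⟩⟩

lemma tau_lt (hS : IntegralMonoid S) {u c : G} (hu : u ∈ S) (hc : c ∈ S) (hc1 : c ≠ 1) :
    tau S u < tau S (u * c) := by
  classical
  set F1 := {p : G × G | p.1 ∈ S ∧ p.2 ∈ S ∧ p.1 * p.2 = u} with hF1
  set F2 := {p : G × G | p.1 ∈ S ∧ p.2 ∈ S ∧ p.1 * p.2 = u * c} with hF2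
  set φ : G × G → G × G := fun p => (p.1, p.2 * c) with hφ
  have hinj : Function.Injective φ := by
    intro p q h
    simp only [hφ, Prod.mk.injEq] at h
    exact Prod.ext h.1 (mul_right_cancel h.2)
  have himg : φ '' F1 ⊆ F2 := by
    rintro p ⟨⟨a, b⟩, ⟨haS, hbS, hab⟩, rfl⟩
    exact ⟨haS, S.mul_mem hbS hc, by rw [← mul_assoc, hab]⟩
  have hFin2 : F2.Finite := hS.ax3 (u * c) (S.mul_mem hu hc)
  have hne : (u * c, 1) ∈ F2 := ⟨S.mul_mem hu hc, S.one_mem, mul_one _⟩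
  have hnotmem : (u * c, (1 : G)) ∉ φ '' F1 := by
    rintro ⟨⟨a, b⟩, ⟨haS, hbS, hab⟩, heq⟩
    simp only [hφ, Prod.mk.injEq] at heq
    have hbc : b = c⁻¹ := eq_inv_of_mul_eq_one_left heq.2
    exact hc1 (hS.ax1 c hc (hbc ▸ hbS))
  have hss : φ '' F1 ⊂ F2 := ⟨himg, fun hsup => hnotmem (hsup hne)⟩
  have h1 : tau S u = (φ '' F1).ncard := (Set.ncard_image_of_injective F1 hinj).symm
  have h2 : tau S (u * c) = F2.ncard := rfl
  rw [h1, h2]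
  exact Set.ncard_lt_ncard hss hFin2

lemma exists_gcd (hS : IntegralMonoid S) {u v : G} (hu : u ∈ S) (hv : v ∈ S) :
    ∃ g ∈ S, SDvd S g u ∧ SDvd S g v ∧
      ∀ d ∈ S, SDvd S d u → SDvd S d v → SDvd S d g := by
  classical
  set D := {d : G | d ∈ S ∧ SDvd S d u ∧ SDvd S d v} with hD
  have hDfin : D.Finite := by
    have h3 := (hS.ax3 u hu).image Prod.fst
    apply h3.subset
    rintro d ⟨hdS, ⟨s, hsS, hus⟩, -⟩
    exact ⟨(d, s), ⟨hdS, hsS, hus.symm⟩, rfl⟩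
  have hDne : D.Nonempty :=
    ⟨1, S.one_mem, ⟨u, hu, (one_mul u).symm⟩, ⟨v, hv, (one_mul v).symm⟩⟩
  obtain ⟨g, hgD, hgmax⟩ := Set.Finite.exists_maximalFor (tau S) D hDfin hDne
  refine ⟨g, hgD.1, hgD.2.1, hgD.2.2, ?_⟩
  intro d hdS hdu hdv
  obtain ⟨t, htS, hts⟩ := exists_lcm hS hgD.1 hdS
  have htmem : t ∈ leftSet S g ∩ leftSet S d := hts ▸ mem_leftSet_self S t
  have hgt : SDvd S g t := htmem.1
  have hdt : SDvd S d t := htmem.2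
  have htu : SDvd S t u := by
    have : u ∈ leftSet S g ∩ leftSet S d := ⟨hgD.2.1, hdu⟩
    rw [hts] at this; exact this
  have htv : SDvd S t v := by
    have : v ∈ leftSet S g ∩ leftSet S d := ⟨hgD.2.2, hdv⟩
    rw [hts] at this; exact this
  have htD : t ∈ D := ⟨htS, htu, htv⟩
  obtain ⟨c, hcS, htc⟩ := hgt
  by_cases hc1 : c = 1
  · rw [hc1, mul_one] at htc
    rw [← htc]; exact hdt
  · exfalso
    have hlt : tau S g < tau S t := by
      rw [htc]; exact tau_lt hS hgD.1 hcS hc1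
    have := hgmax htD hlt.le
    omega

lemma genH (hS : IntegralMonoid S) (hhom : Homogeneous S)
    {e a b c : G} (he : e ∈ S) (ha : a ∈ S) (hb : b ∈ S) (hc : c ∈ S)
    (hea : SDvd S e a) (heb : SDvd S e b) (hec : SDvd S e c)
    (hab : ∀ d ∈ S, SDvd S d a → SDvd S d b → SDvd S d e)
    (hac : ∀ d ∈ S, SDvd S d a → SDvd S d c → SDvd S d e)
    (hset : leftSet S a ∩ leftSet S b = leftSet S a ∩ leftSet S c) : b = c := by
  obtain ⟨a₀, ha₀S, ha₀⟩ := hea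
  obtain ⟨b₀, hb₀S, hb₀⟩ := heb
  obtain ⟨c₀, hc₀S, hc₀⟩ := hec
  have htrans : ∀ (u u₀ : G), u = e * u₀ → ∀ x : G,
      (x ∈ leftSet S u₀ ↔ e * x ∈ leftSet S u) := by
    rintro u u₀ rfl x
    constructor
    · rintro ⟨s, hs, rfl⟩
      exact ⟨s, hs, (mul_assoc e u₀ s).symm⟩
    · rintro ⟨s, hs, hx⟩
      refine ⟨s, hs, ?_⟩
      have : e * x = e * (u₀ * s) := by rw [hx, mul_assoc]
      exact mul_left_cancel this
  have hcop : ∀ u₀ : G, u₀ ∈ S → e * u₀ ∈ S →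
      (∀ d₁ ∈ S, SDvd S d₁ a₀ → SDvd S d₁ u₀ → d₁ = 1) →
      True := fun _ _ _ _ => trivial
  -- coprimality of the quotients
  have hcop1 : ∀ d ∈ S, SDvd S d a₀ → SDvd S d b₀ → d = 1 := by
    intro d hd hda hdb
    obtain ⟨s, hsS, hs⟩ := hda
    obtain ⟨t, htS, ht⟩ := hdb
    have h1 : SDvd S (e * d) a := ⟨s, hsS, by rw [ha₀, hs, mul_assoc]⟩
    have h2 : SDvd S (e * d) b := ⟨t, htS, by rw [hb₀, ht, mul_assoc]⟩
    obtain ⟨r, hrS, hr⟩ := hab (e * d) (S.mul_mem he hd) h1 h2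
    have hdr : (1 : G) = d * r := by
      have : e * 1 = e * (d * r) := by rw [mul_one, ← mul_assoc]; exact hr
      exact mul_left_cancel this
    have : d⁻¹ = r := inv_eq_of_mul_eq_one_right hdr.symm
    exact hS.ax1 d hd (this ▸ hrS)
  have hcop2 : ∀ d ∈ S, SDvd S d a₀ → SDvd S d c₀ → d = 1 := by
    intro d hd hda hdc
    obtain ⟨s, hsS, hs⟩ := hda
    obtain ⟨t, htS, ht⟩ := hdc
    have h1 : SDvd S (e * d) a := ⟨s, hsS, by rw [ha₀, hs, mul_assoc]⟩
    have h2 : SDvd S (e * d) c := ⟨t, htS, by rw [hc₀, ht, mul_assoc]⟩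
    obtain ⟨r, hrS, hr⟩ := hac (e * d) (S.mul_mem he hd) h1 h2
    have hdr : (1 : G) = d * r := by
      have : e * 1 = e * (d * r) := by rw [mul_one, ← mul_assoc]; exact hr
      exact mul_left_cancel this
    have : d⁻¹ = r := inv_eq_of_mul_eq_one_right hdr.symm
    exact hS.ax1 d hd (this ▸ hrS)
  have hset₀ : leftSet S a₀ ∩ leftSet S b₀ = leftSet S a₀ ∩ leftSet S c₀ := by
    ext x
    constructor
    · rintro ⟨h1, h2⟩
      have hx : e * x ∈ leftSet S a ∩ leftSet S b :=
        ⟨(htrans a a₀ ha₀ x).mp h1, (htrans b b₀ hb₀ x).mp h2⟩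
      rw [hset] at hx
      exact ⟨(htrans a a₀ ha₀ x).mpr hx.1, (htrans c c₀ hc₀ x).mpr hx.2⟩
    · rintro ⟨h1, h2⟩
      have hx : e * x ∈ leftSet S a ∩ leftSet S c :=
        ⟨(htrans a a₀ ha₀ x).mp h1, (htrans c c₀ hc₀ x).mp h2⟩
      rw [← hset] at hx
      exact ⟨(htrans a a₀ ha₀ x).mpr hx.1, (htrans b b₀ hb₀ x).mpr hx.2⟩
  have hb₀c₀ : b₀ = c₀ := hhom a₀ b₀ c₀ ha₀S hb₀S hc₀S hcop1 hcop2 hset₀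
  rw [hb₀, hc₀, hb₀c₀]

lemma aux_cross (hS : IntegralMonoid S) (hhom : Homogeneous S)
    {m w z₁ z₂ : G} (hmS : m ∈ S) (hw : w ∈ S) (hz₁ : z₁ ∈ S) (hz₂ : z₂ ∈ S)
    (hm : leftSet S w ∩ leftSet S z₁ = leftSet S m)
    (hz₂m : SDvd S z₂ m)
    (c1 : ∀ d ∈ S, SDvd S d w → SDvd S d z₁ → d = 1)
    (c2 : ∀ d ∈ S, SDvd S d w → SDvd S d z₂ → d = 1) : SDvd S z₂ z₁ := by
  have hmm : m ∈ leftSet S w ∩ leftSet S z₁ := hm ▸ mem_leftSet_self S m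
  have hwm : SDvd S w m := hmm.1
  have hz₁m : SDvd S z₁ m := hmm.2
  obtain ⟨q, hqS, hq⟩ := exists_lcm hS hw hz₂
  have hqq : q ∈ leftSet S w ∩ leftSet S z₂ := hq ▸ mem_leftSet_self S q
  have hwq : SDvd S w q := hqq.1
  have hqm : SDvd S q m := by
    have : m ∈ leftSet S w ∩ leftSet S z₂ := ⟨hwm, hz₂m⟩
    rw [hq] at this; exact this
  obtain ⟨g, hgS, hgq, hgz₁, hgmax⟩ := exists_gcd hS hqS hz₁
  obtain ⟨x, hxS, hx⟩ := exists_lcm hS hw hgS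
  have hxx : x ∈ leftSet S w ∩ leftSet S g := hx ▸ mem_leftSet_self S x
  have hwx : SDvd S w x := hxx.1
  have hgx : SDvd S g x := hxx.2
  have hxq : SDvd S x q := by
    have : q ∈ leftSet S w ∩ leftSet S g := ⟨hwq, hgq⟩
    rw [hx] at this; exact this
  have hxm : SDvd S x m := by
    have : m ∈ leftSet S w ∩ leftSet S g := ⟨hwm, sdvd_trans hgz₁ hz₁m⟩
    rw [hx] at this; exact this
  have hset1 : leftSet S z₁ ∩ leftSet S x = leftSet S m := by
    apply Set.Subset.antisymm
    · rintro t ⟨ht1, ht2⟩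
      have : t ∈ leftSet S w ∩ leftSet S z₁ := ⟨leftSet_subset hwx ht2, ht1⟩
      rw [hm] at this; exact this
    · intro t ht
      exact ⟨leftSet_subset hz₁m ht, leftSet_subset hxm ht⟩
  have hset2 : leftSet S z₁ ∩ leftSet S q = leftSet S m := by
    apply Set.Subset.antisymm
    · rintro t ⟨ht1, ht2⟩
      have : t ∈ leftSet S w ∩ leftSet S z₁ := ⟨leftSet_subset hwq ht2, ht1⟩
      rw [hm] at this; exact this
    · intro t ht
      exact ⟨leftSet_subset hz₁m ht, leftSet_subset hqm ht⟩
  have hxqeq : x = q := genH hS hhom hgS hz₁ hxS hqS hgz₁ hgx hgq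
    (fun d hd hdz hdx => hgmax d hd (sdvd_trans hdx hxq) hdz)
    (fun d hd hdz hdq => hgmax d hd hdq hdz)
    (by rw [hset1, hset2])
  have hz₂g : z₂ = g := hhom w z₂ g hw hz₂ hgS c2
    (fun d hd hdw hdg => c1 d hd hdw (sdvd_trans hdg hgz₁))
    (by rw [hq, hx, hxqeq])
  rw [hz₂g]; exact hgz₁

end Aux

theorem coprime_lcm_two_sided_unique {G : Type*} [Group G] (S : Submonoid G)
    (hS : IntegralMonoid S) (hhom : Homogeneous S)
    (w₁ w₂ z₁ z₂ : G) (hw₁ : w₁ ∈ S) (hw₂ : w₂ ∈ S) (hz₁ : z₁ ∈ S) (hz₂ : z₂ ∈ S)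
    (hlcm : leftSet S w₁ ∩ leftSet S z₁ = leftSet S w₂ ∩ leftSet S z₂)
    (h11 : ∀ e ∈ S, SDvd S e w₁ → SDvd S e z₁ → e = 1)
    (h12 : ∀ e ∈ S, SDvd S e w₁ → SDvd S e z₂ → e = 1)
    (h21 : ∀ e ∈ S, SDvd S e w₂ → SDvd S e z₁ → e = 1)
    (h22 : ∀ e ∈ S, SDvd S e w₂ → SDvd S e z₂ → e = 1) :
    w₁ = w₂ ∧ z₁ = z₂ := by
  obtain ⟨m, hmS, hm⟩ := exists_lcm hS hw₁ hz₁
  have hm2 : leftSet S w₂ ∩ leftSet S z₂ = leftSet S m := by rw [← hlcm]; exact hm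
  have hz₂m : SDvd S z₂ m := (hm2 ▸ mem_leftSet_self S m).2
  have hz₁m : SDvd S z₁ m := (hm ▸ mem_leftSet_self S m).2
  have h1 : SDvd S z₂ z₁ := aux_cross hS hhom hmS hw₁ hz₁ hz₂ hm hz₂m h11 h12
  have h2 : SDvd S z₁ z₂ := aux_cross hS hhom hmS hw₂ hz₂ hz₁ hm2 hz₁m h22 h21
  have hz : z₁ = z₂ := sdvd_antisymm hS hz₁ h2 h1
  have hw : w₁ = w₂ := by
    apply hhom z₁ w₁ w₂ hz₁ hw₁ hw₂
      (fun d hd hd1 hd2 => h11 d hd hd2 hd1)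
      (fun d hd hd1 hd2 => h21 d hd hd2 hd1)
    rw [Set.inter_comm, hm, hz, Set.inter_comm, hm2]
  exact ⟨hw, hz⟩
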